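/- For all real numbers γ > 0, λ ≥ 1 and all real t, T with 0 ≤ t < T: ∫_t^T e^{−γ/(λ(T − s))} ( λ² + λ^{-2}(T − s)^{-2} ) ds ≤ e^{−γ/(λ(T − t))} ( λ² (T − t) + 1/(λ γ) ). -/

import Mathlib

open MeasureTheory intervalIntegral Set Filter Real Topology


/-- For `γ > 0`, `λ ≥ 1` and `0 ≤ t < T`,
`∫_t^T e^{−γ/(λ(T − s))} (λ² + λ⁻²(T − s)⁻²) ds
  ≤ e^{−γ/(λ(T − t))} (λ² (T − t) + 1/(λγ))`. -/
theorem integral_exp_mul_le (γ lam t T : ℝ) (hγ : 0 < γ) (hlam : 1 ≤ lam)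
    (ht : 0 ≤ t) (htT : t < T) :
    (∫ s in t..T,
        Real.exp (-γ / (lam * (T - s))) * (lam ^ 2 + 1 / (lam ^ 2 * (T - s) ^ 2)))
      ≤ Real.exp (-γ / (lam * (T - t))) * (lam ^ 2 * (T - t) + 1 / (lam * γ)) := by
  have hlam0 : (0:ℝ) < lam := lt_of_lt_of_le one_pos hlam
  set f : ℝ → ℝ := fun s =>
    Real.exp (-γ / (lam * (T - s))) * (lam ^ 2 + 1 / (lam ^ 2 * (T - s) ^ 2)) with hfdef
  set R : ℝ := Real.exp (-γ / (lam * (T - t))) * (lam ^ 2 * (T - t) + 1 / (lam * γ)) with hR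
  -- boundedness of f on Icc t T
  have hbdd : ∀ s ∈ Icc t T, ‖f s‖ ≤ lam ^ 2 + 4 / γ ^ 2 := by
    intro s hs
    rcases eq_or_lt_of_le hs.2 with rfl | h
    · have : f s = lam ^ 2 := by simp [hfdef]
      rw [this, Real.norm_eq_abs, abs_of_nonneg (by positivity)]
      have : 0 < 4 / γ ^ 2 := by positivity
      linarith
    · have hu : 0 < T - s := by linarith
      set x : ℝ := γ / (lam * (T - s)) with hx
      have hx0 : 0 < x := by positivity
      have hexpx : x ^ 2 / 4 ≤ Real.exp x := by
        have h1 : Real.exp x = Real.exp (x / 2) * Real.exp (x / 2) := by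
          rw [← Real.exp_add]; ring_nf
        have h2 := Real.add_one_le_exp (x / 2)
        nlinarith [Real.exp_pos (x / 2)]
      have hneg : -γ / (lam * (T - s)) = -x := by rw [hx, neg_div]
      have hexpneg : Real.exp (-x) ≤ 4 / x ^ 2 := by
        rw [Real.exp_neg, inv_eq_one_div, div_le_div_iff₀ (Real.exp_pos x) (by positivity)]
        nlinarith
      have hx2 : x ^ 2 = γ ^ 2 / (lam ^ 2 * (T - s) ^ 2) := by
        rw [hx, div_pow, mul_pow]
      have hle1 : Real.exp (-x) ≤ 1 := Real.exp_le_one_iff.mpr (by linarith)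
      have hfval : f s = Real.exp (-x) * lam ^ 2 + Real.exp (-x) * (1 / (lam ^ 2 * (T - s) ^ 2)) := by
        rw [hfdef]; simp only []; rw [hneg]; ring
      have hb2 : Real.exp (-x) * (1 / (lam ^ 2 * (T - s) ^ 2)) ≤ 4 / γ ^ 2 := by
        have h3 : Real.exp (-x) * (1 / (lam ^ 2 * (T - s) ^ 2))
            ≤ (4 / x ^ 2) * (1 / (lam ^ 2 * (T - s) ^ 2)) := by
          apply mul_le_mul_of_nonneg_right hexpneg (by positivity)
        have h4 : (4 / x ^ 2) * (1 / (lam ^ 2 * (T - s) ^ 2)) = 4 / γ ^ 2 := by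
          rw [hx2]; field_simp
        linarith
      have hb1 : Real.exp (-x) * lam ^ 2 ≤ lam ^ 2 := by
        nlinarith [sq_nonneg lam]
      rw [Real.norm_eq_abs, abs_of_nonneg (by rw [hfval]; positivity), hfval]
      linarith
  have hmeas : Measurable f := by
    apply Measurable.mul
    · exact (measurable_const.div ((measurable_const.sub measurable_id).const_mul lam)).exp
    · exact measurable_const.add (measurable_const.div
        (((measurable_const.sub measurable_id).pow_const 2).const_mul (lam ^ 2)))
  have hIccInt : IntegrableOn f (Icc t T) volume := by
    apply Measure.integrableOn_of_bounded measure_Icc_lt_top.ne hmeas.aestronglyMeasurable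
    exact (ae_restrict_iff' measurableSet_Icc).mpr (Filter.Eventually.of_forall hbdd)
  have hint : IntervalIntegrable f volume t T := by
    rw [intervalIntegrable_iff, uIoc_of_le htT.le]
    exact hIccInt.mono_set Ioc_subset_Icc_self
  -- key inequality on [t, c] for c < T
  have key : ∀ c ∈ Ico t T, (∫ s in t..c, f s) ≤ R := by
    intro c hc
    obtain ⟨htc, hcT⟩ := hc
    set F : ℝ → ℝ := fun s =>
      Real.exp (-γ / (lam * (T - t))) * lam ^ 2 * (s - t)
        - (1 / (lam * γ)) * Real.exp (-γ / (lam * (T - s))) with hF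
    set G : ℝ → ℝ := fun s =>
      Real.exp (-γ / (lam * (T - t))) * lam ^ 2
        + Real.exp (-γ / (lam * (T - s))) / (lam ^ 2 * (T - s) ^ 2) with hG
    have hderiv : ∀ s ∈ uIcc t c, HasDerivAt F (G s) s := by
      intro s hs
      rw [uIcc_of_le htc] at hs
      have hTs : 0 < T - s := by linarith [hs.2]
      have hne : lam * (T - s) ≠ 0 := by positivity
      have h1 : HasDerivAt (fun s : ℝ => T - s) (-1) s := by
        simpa using (hasDerivAt_id s).const_sub T
      have h2 : HasDerivAt (fun s : ℝ => lam * (T - s)) (lam * (-1)) s := h1.const_mul lam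
      have h3 : HasDerivAt (fun s : ℝ => -γ / (lam * (T - s)))
          (-γ * (-(lam * (-1)) / (lam * (T - s)) ^ 2)) s := by
        simpa [div_eq_mul_inv] using (h2.inv hne).const_mul (-γ)
      have h4 := (h3.exp).const_mul (1 / (lam * γ))
      have h5 := ((hasDerivAt_id s).sub_const t).const_mul
        (Real.exp (-γ / (lam * (T - t))) * lam ^ 2)
      have h6 := h5.sub h4
      convert h6 using 1
      · rfl
      · rfl
      · rfl
      rw [hG]
      field_simp
      ring
    have hGcont : ContinuousOn G (uIcc t c) := by
      rw [uIcc_of_le htc]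
      apply ContinuousOn.add continuousOn_const
      apply ContinuousOn.div
      · apply ContinuousOn.rexp
        apply ContinuousOn.div continuousOn_const
          (continuousOn_const.mul (continuousOn_const.sub continuousOn_id))
        intro s hs
        have : 0 < T - s := by linarith [hs.2]
        exact mul_ne_zero hlam0.ne' this.ne'
      · exact continuousOn_const.mul ((continuousOn_const.sub continuousOn_id).pow 2)
      · intro s hs
        have : 0 < T - s := by linarith [hs.2]
        positivity
    have hGint : IntervalIntegrable G volume t c := hGcont.intervalIntegrable
    have hfint : IntervalIntegrable f volume t c := by
      apply hint.mono_set
      rw [uIcc_of_le htc, uIcc_of_le htT.le]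
      exact Icc_subset_Icc le_rfl hcT.le
    have hmono : (∫ s in t..c, f s) ≤ ∫ s in t..c, G s := by
      apply intervalIntegral.integral_mono_on htc hfint hGint
      intro s hs
      have hTs : 0 < T - s := by linarith [hs.2]
      have hTt : 0 < T - t := by linarith
      have hexple : Real.exp (-γ / (lam * (T - s))) ≤ Real.exp (-γ / (lam * (T - t))) := by
        apply Real.exp_le_exp.mpr
        rw [neg_div, neg_div, neg_le_neg_iff]
        exact div_le_div_of_nonneg_left hγ.le (by positivity) (by nlinarith [hs.1])
      rw [hfdef, hG]
      simp only []
      have h7 : Real.exp (-γ / (lam * (T - s))) * lam ^ 2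
          ≤ Real.exp (-γ / (lam * (T - t))) * lam ^ 2 :=
        mul_le_mul_of_nonneg_right hexple (by positivity)
      have h8 : Real.exp (-γ / (lam * (T - s))) * (1 / (lam ^ 2 * (T - s) ^ 2))
          = Real.exp (-γ / (lam * (T - s))) / (lam ^ 2 * (T - s) ^ 2) := by ring
      nlinarith [Real.exp_pos (-γ / (lam * (T - s)))]
    have hFTC : (∫ s in t..c, G s) = F c - F t :=
      intervalIntegral.integral_eq_sub_of_hasDerivAt hderiv hGint
    have hfin : F c - F t ≤ R := by
      rw [hF, hR]
      have e1 : 0 ≤ Real.exp (-γ / (lam * (T - c))) := (Real.exp_pos _).le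
      have e2 : 0 ≤ Real.exp (-γ / (lam * (T - t))) := (Real.exp_pos _).le
      have e3 : 0 < 1 / (lam * γ) := by positivity
      have e4 : Real.exp (-γ / (lam * (T - t))) * lam ^ 2 * (c - t)
          ≤ Real.exp (-γ / (lam * (T - t))) * lam ^ 2 * (T - t) := by
        apply mul_le_mul_of_nonneg_left (by linarith) (by positivity)
      nlinarith [mul_nonneg e3.le e1]
    calc (∫ s in t..c, f s) ≤ ∫ s in t..c, G s := hmono
      _ = F c - F t := hFTC
      _ ≤ R := hfin
  -- limit argument
  have hprim : ContinuousOn (fun c => ∫ s in t..c, f s) (Icc t T) := by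
    have := intervalIntegral.continuousOn_primitive_interval (μ := volume) (a := t) (b := T)
      (by rw [uIcc_of_le htT.le]; exact hIccInt)
    rwa [uIcc_of_le htT.le] at this
  have hNB : (𝓝[Ico t T] T).NeBot :=
    (right_nhdsWithin_Ioo_neBot htT).mono (nhdsWithin_mono T Ioo_subset_Ico_self)
  have htend : Tendsto (fun c => ∫ s in t..c, f s) (𝓝[Ico t T] T) (𝓝 (∫ s in t..T, f s)) :=
    (hprim T (right_mem_Icc.mpr htT.le)).mono_left (nhdsWithin_mono T Ico_subset_Icc_self)
  exact le_of_tendsto htend (eventually_mem_nhdsWithin.mono key)
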